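/- Let A be a C*-algebra and k ≥ 1. Then Gen_k(A) is a Gδ-subset of A^k, and Gen_k(A)_sa is a Gδ-subset of A^k_sa. -/

import Mathlib

open Set Topology TopologicalSpace

section aux

instance freeSemigroupCountable {α : Type*} [Countable α] : Countable (FreeSemigroup α) :=
  Function.Injective.countable (f := fun x : FreeSemigroup α => (x.head, x.tail))
    (fun a b h => by cases a; cases b; simpa [FreeSemigroup.ext_iff] using h)

lemma subsemigroup_closure_countable {M : Type*} [Semigroup M] {s : Set M}
    (hs : s.Countable) : (Subsemigroup.closure s : Set M).Countable := by
  haveI := hs.to_subtype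
  have hsub : (Subsemigroup.closure s : Set M) ⊆
      Set.range (FreeSemigroup.lift (Subtype.val : s → M)) := by
    intro x hx
    induction hx using Subsemigroup.closure_induction with
    | mem y hy => exact ⟨FreeSemigroup.of ⟨y, hy⟩, FreeSemigroup.lift_of _ _⟩
    | mul y z hy hz ihy ihz =>
      obtain ⟨u, rfl⟩ := ihy; obtain ⟨v, rfl⟩ := ihz
      exact ⟨u * v, map_mul _ _ _⟩
  exact (Set.countable_range _).mono hsub

variable {A : Type*} [NonUnitalCStarAlgebra A] {k : ℕ}

lemma exists_cont_fun (a : Fin k → A) {y : A}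
    (hy : y ∈ NonUnitalStarAlgebra.adjoin ℂ (Set.range a)) :
    ∃ f : (Fin k → A) → A, Continuous f ∧ f a = y ∧
      ∀ b : Fin k → A, f b ∈ NonUnitalStarAlgebra.adjoin ℂ (Set.range b) := by
  induction hy using NonUnitalStarAlgebra.adjoin_induction with
  | mem x hx =>
    obtain ⟨i, rfl⟩ := hx
    exact ⟨fun b => b i, continuous_apply i, rfl,
      fun b => NonUnitalStarAlgebra.subset_adjoin ℂ _ ⟨i, rfl⟩⟩
  | add x y hx hy ihx ihy =>
    obtain ⟨f, cf, fa, fm⟩ := ihx; obtain ⟨g, cg, ga, gm⟩ := ihy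
    exact ⟨fun b => f b + g b, cf.add cg, by simp [fa, ga],
      fun b => add_mem (fm b) (gm b)⟩
  | zero => exact ⟨fun _ => 0, continuous_const, rfl, fun b => zero_mem _⟩
  | mul x y hx hy ihx ihy =>
    obtain ⟨f, cf, fa, fm⟩ := ihx; obtain ⟨g, cg, ga, gm⟩ := ihy
    exact ⟨fun b => f b * g b, cf.mul cg, by simp [fa, ga],
      fun b => mul_mem (fm b) (gm b)⟩
  | smul r x hx ih =>
    obtain ⟨f, cf, fa, fm⟩ := ih
    exact ⟨fun b => r • f b, cf.const_smul r, by simp [fa],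
      fun b => SMulMemClass.smul_mem r (fm b)⟩
  | star x hx ih =>
    obtain ⟨f, cf, fa, fm⟩ := ih
    exact ⟨fun b => star (f b), cf.star, by simp [fa], fun b => star_mem (fm b)⟩

lemma isOpen_near (x : A) (ε : ℝ) :
    IsOpen {a : Fin k → A |
      ∃ y ∈ NonUnitalStarAlgebra.adjoin ℂ (Set.range a), ‖y - x‖ < ε} := by
  rw [isOpen_iff_mem_nhds]
  rintro a ⟨y, hy, hyx⟩
  obtain ⟨f, cf, fa, fm⟩ := exists_cont_fun a hy
  have hopen : IsOpen {b : Fin k → A | ‖f b - x‖ < ε} :=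
    isOpen_lt (by fun_prop) continuous_const
  have hmem : a ∈ {b : Fin k → A | ‖f b - x‖ < ε} := by simpa [fa] using hyx
  filter_upwards [hopen.mem_nhds hmem] with b hb using ⟨f b, fm b, hb⟩

lemma isGδ_preimage {X Y : Type*} [TopologicalSpace X] [TopologicalSpace Y]
    {s : Set Y} (hs : IsGδ s) {f : X → Y} (hf : Continuous f) : IsGδ (f ⁻¹' s) := by
  obtain ⟨g, hg, rfl⟩ := hs.eq_iInter_nat
  rw [Set.preimage_iInter]
  exact .iInter_of_isOpen fun n => (hg n).preimage hf

end aux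

/-- The entries of the tuple `a` generate `A` as a C*-algebra: the smallest closed
`*`-subalgebra of `A` containing them is `A` itself. -/
def Generates {A : Type*} [NonUnitalCStarAlgebra A] {k : ℕ} (a : Fin k → A) : Prop :=
  (NonUnitalStarAlgebra.adjoin ℂ (Set.range a)).topologicalClosure = ⊤

lemma generates_iff_dense {A : Type*} [NonUnitalCStarAlgebra A] {k : ℕ} (a : Fin k → A) :
    Generates a ↔ closure (NonUnitalStarAlgebra.adjoin ℂ (Set.range a) : Set A) = univ := by
  constructor
  · intro h
    have := congrArg (SetLike.coe) h
    simp at this; exact this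
  · intro h
    apply SetLike.coe_injective
    simp; exact h

/-- For a C*-algebra `A` and `k ≥ 1`, the set `Gen_k(A)` is a Gδ-subset of `A^k`,
and `Gen_k(A)_sa` is a Gδ-subset of `A^k_sa` (with its subspace topology). -/
theorem gen_isGdelta {A : Type*} [NonUnitalCStarAlgebra A] {k : ℕ} (hk : 1 ≤ k) :
    IsGδ {a : Fin k → A | Generates a} ∧
    IsGδ {a : {x : Fin k → A // ∀ i, IsSelfAdjoint (x i)} | Generates a.1} := by
  have main : IsGδ {a : Fin k → A | Generates a} := by
    rcases Set.eq_empty_or_nonempty {a : Fin k → A | Generates a} with he | ⟨a₀, ha₀⟩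
    · rw [he]; exact .empty
    · -- A is separable
      have hsep : SeparableSpace A := by
        have h1 : (Set.range a₀ ∪ star (Set.range a₀)).Countable :=
          ((Set.finite_range a₀).union ((Set.finite_range a₀).star)).countable
        have h2 := subsemigroup_closure_countable (M := A) h1
        have h3 : IsSeparable
            (Submodule.span ℂ (Subsemigroup.closure (Set.range a₀ ∪ star (Set.range a₀)) : Set A)
              : Set A) :=
          h2.isSeparable.span
        have h4 : (NonUnitalStarAlgebra.adjoin ℂ (Set.range a₀) : Set A) =
            (Submodule.span ℂ
              (Subsemigroup.closure (Set.range a₀ ∪ star (Set.range a₀)) : Set A) : Set A) := by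
          have := NonUnitalStarAlgebra.adjoin_eq_span (R := ℂ) (Set.range a₀)
          exact congrArg SetLike.coe this
        have h5 : IsSeparable (univ : Set A) := by
          rw [← (generates_iff_dense a₀).1 ha₀]
          exact (h4 ▸ h3).closure
        exact isSeparable_univ_iff.1 h5
      obtain ⟨D, hDc, hDd⟩ := exists_countable_dense A
      have hEq : {a : Fin k → A | Generates a} =
          ⋂ x ∈ D, ⋂ n : ℕ, {a : Fin k → A |
            ∃ y ∈ NonUnitalStarAlgebra.adjoin ℂ (Set.range a), ‖y - x‖ < 1 / (n + 1)} := by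
        ext a
        simp only [Set.mem_setOf_eq, Set.mem_iInter]
        constructor
        · intro ha x hx n
          have hcl : x ∈ closure (NonUnitalStarAlgebra.adjoin ℂ (Set.range a) : Set A) := by
            rw [(generates_iff_dense a).1 ha]; trivial
          rw [Metric.mem_closure_iff] at hcl
          obtain ⟨y, hy, hxy⟩ := hcl (1 / (n + 1)) (by positivity)
          exact ⟨y, hy, by rwa [← dist_eq_norm, dist_comm]⟩
        · intro h
          rw [generates_iff_dense]
          have hD : D ⊆ closure (NonUnitalStarAlgebra.adjoin ℂ (Set.range a) : Set A) := by
            intro x hx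
            rw [Metric.mem_closure_iff]
            intro ε hε
            obtain ⟨n, hn⟩ := exists_nat_one_div_lt hε
            obtain ⟨y, hy, hxy⟩ := h x hx n
            exact ⟨y, hy, by rw [dist_comm, dist_eq_norm]; linarith⟩
          have : closure D ⊆ closure (NonUnitalStarAlgebra.adjoin ℂ (Set.range a) : Set A) :=
            closure_minimal hD isClosed_closure
          rw [hDd.closure_eq] at this
          exact this.antisymm' (subset_univ _)
      rw [hEq]
      exact .biInter hDc fun x _ => .iInter fun n => (isOpen_near x _).isGδ
  refine ⟨main, ?_⟩
  have : {a : {x : Fin k → A // ∀ i, IsSelfAdjoint (x i)} | Generates a.1} =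
      (Subtype.val) ⁻¹' {a : Fin k → A | Generates a} := rfl
  rw [this]
  exact isGδ_preimage main continuous_subtype_val
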